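/- Let A, B ⊆ Z_m^n be sets and let ω be a complex primitive m-th root of unity. If |E_{a∼A, b∼B}[ω^{⟨a,b⟩}]| ≥ δ, then Pr_{a,a'∼A}[a − a' ∈ Spec_{δ^2/2}(B)] ≥ δ^2/2, where a, a' are independent uniform elements of A. -/

import Mathlib

open Finset

/-- Inner product of two vectors in `(ZMod m)^n`. -/
def mvInner {m n : ℕ} (u v : Fin n → ZMod m) : ZMod m := ∑ k, u k * v k

lemma mvInner_sub {m n : ℕ} (u v w : Fin n → ZMod m) :
    mvInner (u - v) w = mvInner u w - mvInner v w := by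
  simp [mvInner, sub_mul, Finset.sum_sub_distrib]

/-- Part of Claim 6.7: if `|E_{a∼A,b∼B}[ω^{⟨a,b⟩}]| ≥ δ`, then a random difference of two
elements of `A` lies in `Spec_{δ²/2}(B)` with probability at least `δ²/2`. -/
theorem diff_in_spectrum (m n : ℕ) [NeZero m] (hm : 2 ≤ m)
    (ω : ℂ) (hω : IsPrimitiveRoot ω m)
    (A B : Finset (Fin n → ZMod m)) (hA : A.Nonempty) (hB : B.Nonempty)
    (δ : ℝ) (hδ : 0 ≤ δ)
    (hbias : δ ≤ ‖(∑ a ∈ A, ∑ b ∈ B, ω ^ (mvInner a b).val) /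
      ((A.card : ℂ) * (B.card : ℂ))‖) :
    δ ^ 2 / 2 ≤
      (({p : (Fin n → ZMod m) × (Fin n → ZMod m) | p.1 ∈ A ∧ p.2 ∈ A ∧
          δ ^ 2 / 2 ≤ ‖(∑ b ∈ B, ω ^ (mvInner (p.1 - p.2) b).val) /
            (B.card : ℂ)‖}).ncard : ℝ) / ((A.card : ℝ)) ^ 2 := by
  classical
  have hm0 : m ≠ 0 := NeZero.ne m
  have hω1 : ω ^ m = 1 := hω.pow_eq_one
  set e : ZMod m → ℂ := fun x => ω ^ x.val with he
  have habsω : ‖ω‖ = 1 := by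
    exact Complex.norm_eq_one_of_pow_eq_one hω1 hm0
  have habs : ∀ x, ‖e x‖ = 1 := by
    intro x; simp [he, map_pow, habsω]
  have hne : ∀ x, e x ≠ 0 := by
    intro x h
    have h2 := habs x
    rw [h] at h2
    simp at h2
  have he_add : ∀ x y, e (x + y) = e x * e y := by
    intro x y
    simp only [he, ← pow_add, ZMod.val_add]
    exact (pow_eq_pow_mod _ hω1).symm
  have he_zero : e 0 = 1 := by simp [he, ZMod.val_zero]
  have he_conj : ∀ x, (starRingEnd ℂ) (e x) = e (-x) := by
    intro x
    have h1 : e (-x) * e x = 1 := by rw [← he_add, neg_add_cancel, he_zero]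
    have h2 : (starRingEnd ℂ) (e x) * e x = 1 := by
      rw [mul_comm, Complex.mul_conj, ← Complex.sq_norm, habs]
      norm_num
    exact mul_right_cancel₀ (hne x) (h2.trans h1.symm)
  set N : ℝ := (A.card : ℝ) with hN
  set M : ℝ := (B.card : ℝ) with hM
  have hN0 : 0 < N := by
    rw [hN]; exact_mod_cast Finset.card_pos.mpr hA
  have hM0 : 0 < M := by
    rw [hM]; exact_mod_cast Finset.card_pos.mpr hB
  set T : (Fin n → ZMod m) → ℂ := fun b => ∑ a ∈ A, e (mvInner a b) with hT
  set G : (Fin n → ZMod m) × (Fin n → ZMod m) → ℂ :=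
    fun p => ∑ b ∈ B, e (mvInner (p.1 - p.2) b) with hG
  set S : ℂ := ∑ a ∈ A, ∑ b ∈ B, e (mvInner a b) with hS
  -- Step A: δ * (N * M) ≤ |S|
  have hstepA : δ * (N * M) ≤ ‖S‖ := by
    have h2 : ‖S / ((A.card : ℂ) * (B.card : ℂ))‖ = ‖S‖ / (N * M) := by
      rw [norm_div, norm_mul, Complex.norm_natCast, Complex.norm_natCast, hN, hM]
    have h3 : δ ≤ ‖S‖ / (N * M) := by
      rw [← h2]; exact hbias
    exact (le_div_iff₀ (by positivity)).mp h3
  -- Step B: |S|² ≤ M * ∑_b |T b|²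
  have hstepB : ‖S‖ ^ 2 ≤ M * ∑ b ∈ B, ‖T b‖ ^ 2 := by
    have hSsum : S = ∑ b ∈ B, T b := by
      rw [hS]; exact Finset.sum_comm
    have h1 : ‖S‖ ≤ ∑ b ∈ B, ‖T b‖ := by
      rw [hSsum]; exact norm_sum_le _ _
    have h2 : ‖S‖ ^ 2 ≤ (∑ b ∈ B, ‖T b‖) ^ 2 := by
      have := norm_nonneg S
      nlinarith [Finset.sum_nonneg (fun b (_ : b ∈ B) => norm_nonneg (T b))]
    refine h2.trans ?_
    have := sq_sum_le_card_mul_sum_sq (s := B) (f := fun b => ‖T b‖)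
    simpa [hM] using this
  -- Step C: ∑_b |T b|² ≤ ∑_{p ∈ A ×ˢ A} |G p|
  have hb : ∀ b, ∑ p ∈ A ×ˢ A, e (mvInner (p.1 - p.2) b)
      = ((‖T b‖ ^ 2 : ℝ) : ℂ) := by
    intro b
    rw [Finset.sum_product]
    have hsplit : ∀ a a', e (mvInner (a - a') b) = e (mvInner a b) * e (-(mvInner a' b)) := by
      intro a a'; rw [mvInner_sub, sub_eq_add_neg, he_add]
    calc ∑ a ∈ A, ∑ a' ∈ A, e (mvInner (a - a') b)
        = (∑ a ∈ A, e (mvInner a b)) * ∑ a' ∈ A, e (-(mvInner a' b)) := by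
          rw [Finset.sum_mul_sum]
          exact Finset.sum_congr rfl fun a _ =>
            Finset.sum_congr rfl fun a' _ => hsplit a a'
      _ = T b * (starRingEnd ℂ) (T b) := by
          rw [hT]
          simp only [map_sum, he_conj]
      _ = ((‖T b‖ ^ 2 : ℝ) : ℂ) := by
          rw [Complex.mul_conj, Complex.normSq_eq_norm_sq]
  have hsum : ∑ p ∈ A ×ˢ A, G p = ((∑ b ∈ B, ‖T b‖ ^ 2 : ℝ) : ℂ) := by
    calc ∑ p ∈ A ×ˢ A, G p = ∑ p ∈ A ×ˢ A, ∑ b ∈ B, e (mvInner (p.1 - p.2) b) := rfl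
      _ = ∑ b ∈ B, ∑ p ∈ A ×ˢ A, e (mvInner (p.1 - p.2) b) := Finset.sum_comm
      _ = ∑ b ∈ B, ((‖T b‖ ^ 2 : ℝ) : ℂ) :=
          Finset.sum_congr rfl fun b _ => hb b
      _ = ((∑ b ∈ B, ‖T b‖ ^ 2 : ℝ) : ℂ) := by push_cast; ring
  have hstepC : ∑ b ∈ B, ‖T b‖ ^ 2 ≤ ∑ p ∈ A ×ˢ A, ‖G p‖ := by
    have h1 : (∑ b ∈ B, ‖T b‖ ^ 2) = (∑ p ∈ A ×ˢ A, G p).re := by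
      rw [hsum, Complex.ofReal_re]
    rw [h1]
    exact (Complex.re_le_norm _).trans (norm_sum_le _ _)
  -- counting
  set D : Finset ((Fin n → ZMod m) × (Fin n → ZMod m)) :=
    (A ×ˢ A).filter (fun p => δ ^ 2 / 2 ≤ ‖G p / (B.card : ℂ)‖) with hD
  have habsGM : ∀ p, ‖G p / (B.card : ℂ)‖ = ‖G p‖ / M := by
    intro p; rw [norm_div, Complex.norm_natCast, hM]
  have hGle : ∀ p, ‖G p‖ ≤ M := by
    intro p
    refine (norm_sum_le _ _).trans ?_
    have : ∀ b ∈ B, ‖e (mvInner (p.1 - p.2) b)‖ = 1 := fun b _ => habs _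
    rw [Finset.sum_congr rfl this, Finset.sum_const, nsmul_eq_mul, mul_one, hM]
  have hstepD : ∑ p ∈ A ×ˢ A, ‖G p‖
      ≤ (D.card : ℝ) * M + ((A ×ˢ A).card : ℝ) * (δ ^ 2 / 2 * M) := by
    rw [← Finset.sum_filter_add_sum_filter_not (A ×ˢ A)
      (fun p => δ ^ 2 / 2 ≤ ‖G p / (B.card : ℂ)‖)]
    refine add_le_add ?_ ?_
    · have := Finset.sum_le_card_nsmul D (fun p => ‖G p‖) M
        (fun p _ => hGle p)
      simpa [nsmul_eq_mul, hD] using this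
    · have hbd : ∀ p ∈ (A ×ˢ A).filter
          (fun p => ¬ δ ^ 2 / 2 ≤ ‖G p / (B.card : ℂ)‖),
          ‖G p‖ ≤ δ ^ 2 / 2 * M := by
        intro p hp
        rw [Finset.mem_filter] at hp
        have h1 : ‖G p / (B.card : ℂ)‖ ≤ δ ^ 2 / 2 := le_of_not_ge hp.2
        rw [habsGM] at h1
        calc ‖G p‖ = ‖G p‖ / M * M := by field_simp
          _ ≤ δ ^ 2 / 2 * M := by
              exact mul_le_mul_of_nonneg_right h1 hM0.le
      have := Finset.sum_le_card_nsmul _ (fun p => ‖G p‖) (δ ^ 2 / 2 * M) hbd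
      refine this.trans ?_
      rw [nsmul_eq_mul]
      have hcard : (((A ×ˢ A).filter
          (fun p => ¬ δ ^ 2 / 2 ≤ ‖G p / (B.card : ℂ)‖)).card : ℝ)
          ≤ ((A ×ˢ A).card : ℝ) := by
        exact_mod_cast Finset.card_filter_le _ _
      exact mul_le_mul_of_nonneg_right hcard (by positivity)
  -- combine
  have hAA : ((A ×ˢ A).card : ℝ) = N ^ 2 := by
    rw [Finset.card_product, hN]; push_cast; ring
  have h1 : δ ^ 2 * (N * M) ^ 2 ≤ ‖S‖ ^ 2 := by
    calc δ ^ 2 * (N * M) ^ 2 = (δ * (N * M)) ^ 2 := by ring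
      _ ≤ ‖S‖ ^ 2 := pow_le_pow_left₀ (by positivity) hstepA 2
  have h2 : ‖S‖ ^ 2 ≤ M * ∑ p ∈ A ×ˢ A, ‖G p‖ :=
    hstepB.trans (mul_le_mul_of_nonneg_left hstepC hM0.le)
  have h3 : M * ∑ p ∈ A ×ˢ A, ‖G p‖
      ≤ M * ((D.card : ℝ) * M + N ^ 2 * (δ ^ 2 / 2 * M)) := by
    rw [← hAA]
    exact mul_le_mul_of_nonneg_left hstepD hM0.le
  have h5 := h1.trans (h2.trans h3)
  have h6 : δ ^ 2 * N ^ 2 ≤ (D.card : ℝ) + N ^ 2 * (δ ^ 2 / 2) := by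
    have hM2 : (0:ℝ) < M ^ 2 := by positivity
    refine (mul_le_mul_iff_of_pos_right hM2).mp ?_
    calc δ ^ 2 * N ^ 2 * M ^ 2 = δ ^ 2 * (N * M) ^ 2 := by ring
      _ ≤ M * ((D.card : ℝ) * M + N ^ 2 * (δ ^ 2 / 2 * M)) := h5
      _ = ((D.card : ℝ) + N ^ 2 * (δ ^ 2 / 2)) * M ^ 2 := by ring
  have hmain : δ ^ 2 / 2 * N ^ 2 ≤ (D.card : ℝ) := by linarith
  -- identify the set with the finset D
  have hset : {p : (Fin n → ZMod m) × (Fin n → ZMod m) | p.1 ∈ A ∧ p.2 ∈ A ∧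
      δ ^ 2 / 2 ≤ ‖(∑ b ∈ B, ω ^ (mvInner (p.1 - p.2) b).val) /
        (B.card : ℂ)‖} = ↑D := by
    ext p
    constructor
    · rintro ⟨h1, h2, h3⟩
      rw [Finset.mem_coe, hD, Finset.mem_filter, Finset.mem_product]
      exact ⟨⟨h1, h2⟩, h3⟩
    · intro hp
      rw [Finset.mem_coe, hD, Finset.mem_filter, Finset.mem_product] at hp
      exact ⟨hp.1.1, hp.1.2, hp.2⟩
  rw [hset, Set.ncard_coe_finset]
  rw [le_div_iff₀ (by positivity)]
  exact hmain
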